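/- Suppose a positive stock price process S with S_0 > 0 satisfies E[(S_T - S_0)^+] ~ (|σ_0|/√(2π)) √T as T ↓ 0 with σ_0 ≠ 0, and let σ_impl(T) ∈ [0,∞] be defined by E[(S_T - S_0)^+] = S_0 ( Φ(σ_impl(T)√T/2) - Φ(-σ_impl(T)√T/2) ). Then σ_impl(T) → |σ_0|/S_0 as T ↓ 0. -/

import Mathlib

open MeasureTheory ProbabilityTheory Filter Real

/-- The standard normal cumulative distribution function. -/
noncomputable def stdNormalCDF (x : ℝ) : ℝ := ((gaussianReal 0 1) (Set.Iic x)).toReal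

namespace IVaux

noncomputable def phi : ℝ → ℝ := gaussianPDFReal 0 1

lemma phi_cont : Continuous phi := by
  unfold phi gaussianPDFReal
  fun_prop

lemma phi_pos (x : ℝ) : 0 < phi x := gaussianPDFReal_pos 0 1 x one_ne_zero

lemma phi_intg : Integrable phi := integrable_gaussianPDFReal 0 1

lemma phi_ii (a b : ℝ) : IntervalIntegrable phi volume a b := phi_intg.intervalIntegrable

lemma phi_zero : phi 0 = (Real.sqrt (2 * π))⁻¹ := by
  unfold phi gaussianPDFReal
  simp

lemma cdf_eq (x : ℝ) : stdNormalCDF x = ∫ t in Set.Iic x, phi t := by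
  rw [stdNormalCDF, gaussianReal_apply_eq_integral 0 one_ne_zero,
    ENNReal.toReal_ofReal]
  · rfl
  · exact setIntegral_nonneg measurableSet_Iic fun t _ => (phi_pos t).le

noncomputable def F (x : ℝ) : ℝ := stdNormalCDF x - stdNormalCDF (-x)

noncomputable def K (y : ℝ) : ℝ := ∫ t in (0:ℝ)..y, phi t

lemma K_sub (a b : ℝ) : K b - K a = ∫ t in a..b, phi t := by
  have := intervalIntegral.integral_add_adjacent_intervals (phi_ii 0 a) (phi_ii a b)
  unfold K; linarith

lemma K_mono : Monotone K := by
  intro a b hab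
  have h := K_sub a b
  have : 0 ≤ ∫ t in a..b, phi t :=
    intervalIntegral.integral_nonneg hab fun t _ => (phi_pos t).le
  linarith

lemma F_eq (x : ℝ) : F x = K x - K (-x) := by
  rw [F, cdf_eq, cdf_eq, K_sub,
    intervalIntegral.integral_Iic_sub_Iic phi_intg.integrableOn phi_intg.integrableOn]

lemma F_zero : F 0 = 0 := by simp [F_eq]

lemma F_mono : MonotoneOn F (Set.Ici 0) := by
  intro a ha b hb hab
  rw [F_eq, F_eq]
  have h1 := K_mono hab
  have h2 := K_mono (neg_le_neg hab)
  linarith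

lemma F_pos {x : ℝ} (hx : 0 < x) : 0 < F x := by
  rw [F_eq, K_sub]
  exact intervalIntegral.intervalIntegral_pos_of_pos_on (phi_ii _ _)
    (fun t _ => phi_pos t) (by linarith)

lemma F_hasDeriv : HasDerivAt F (2 * phi 0) 0 := by
  have hK : HasDerivAt K (phi 0) 0 :=
    intervalIntegral.integral_hasDerivAt_right (phi_ii 0 0)
      phi_cont.aestronglyMeasurable.stronglyMeasurableAtFilter phi_cont.continuousAt
  have hKn : HasDerivAt (fun x => K (-x)) (phi 0 * (-1)) 0 := by
    have hK' : HasDerivAt K (phi 0) (-(0:ℝ)) := by rwa [neg_zero]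
    have := hK'.comp 0 (hasDerivAt_neg (0:ℝ))
    simpa [Function.comp_def] using this
  have h := hK.sub hKn
  have : (fun x => K x - K (-x)) = F := by funext x; rw [F_eq]
  rw [show (K - fun x => K (-x)) = fun x => K x - K (-x) from rfl, this] at h
  rw [show (2 * phi 0) = phi 0 - phi 0 * -1 by ring]
  exact h

lemma F_slope : Tendsto (fun y => F y / y) (nhdsWithin 0 (Set.Ioi 0)) (nhds (2 * phi 0)) := by
  have h := hasDerivAt_iff_tendsto_slope.mp F_hasDeriv
  have h2 : Tendsto (slope F 0) (nhdsWithin 0 (Set.Ioi 0)) (nhds (2 * phi 0)) :=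
    h.mono_left (nhdsWithin_mono 0 fun x hx => ne_of_gt hx)
  refine h2.congr fun y => ?_
  simp [slope, F_zero, div_eq_inv_mul]

end IVaux

/-- If a positive stock price process `S` with `S₀ > 0` satisfies
`E[(S_T - S₀)⁺] ~ (|σ₀|/√(2π)) √T` as `T ↓ 0` with `σ₀ ≠ 0`, and `σ_impl(T) ≥ 0` solves
`E[(S_T - S₀)⁺] = S₀ (Φ(σ_impl(T)√T/2) - Φ(-σ_impl(T)√T/2))`, then
`σ_impl(T) → |σ₀|/S₀` as `T ↓ 0`. -/
theorem implied_volatility_limit {Ω : Type*} [MeasurableSpace Ω]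
    (P : Measure Ω) [IsProbabilityMeasure P]
    (S : ℝ → Ω → ℝ) (hSpos : ∀ T ω, 0 < S T ω)
    (S₀ : ℝ) (hS₀ : 0 < S₀) (σ₀ : ℝ) (hσ₀ : σ₀ ≠ 0)
    (hasymp : Tendsto (fun T : ℝ => (∫ ω, max (S T ω - S₀) 0 ∂P) / Real.sqrt T)
      (nhdsWithin 0 (Set.Ioi 0)) (nhds (|σ₀| / Real.sqrt (2 * π))))
    (σimpl : ℝ → ℝ) (hσimpl_nonneg : ∀ T : ℝ, 0 < T → 0 ≤ σimpl T)
    (hσimpl : ∀ T : ℝ, 0 < T →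
      ∫ ω, max (S T ω - S₀) 0 ∂P
        = S₀ * (stdNormalCDF (σimpl T * Real.sqrt T / 2)
            - stdNormalCDF (-(σimpl T * Real.sqrt T / 2)))) :
    Tendsto σimpl (nhdsWithin 0 (Set.Ioi 0)) (nhds (|σ₀| / S₀)) := by
  classical
  set l := nhdsWithin (0:ℝ) (Set.Ioi 0) with hl
  set C : ℝ → ℝ := fun T => ∫ ω, max (S T ω - S₀) 0 ∂P with hCdef
  set x : ℝ → ℝ := fun T => σimpl T * Real.sqrt T / 2 with hxdef
  set L : ℝ := |σ₀| / Real.sqrt (2 * π) with hLdef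
  have hsqrt2pi : (0:ℝ) < Real.sqrt (2 * π) := Real.sqrt_pos.mpr (by positivity)
  have hLpos : 0 < L := div_pos (abs_pos.mpr hσ₀) hsqrt2pi
  have hmemIoi : ∀ᶠ T in l, T ∈ Set.Ioi (0:ℝ) := self_mem_nhdsWithin
  have hCF : ∀ᶠ T in l, C T = S₀ * IVaux.F (x T) := by
    filter_upwards [hmemIoi] with T hT
    exact hσimpl T hT
  have hsq : Tendsto (fun T : ℝ => Real.sqrt T) l (nhds 0) := by
    have := Real.continuous_sqrt.tendsto 0
    rw [Real.sqrt_zero] at this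
    exact this.mono_left nhdsWithin_le_nhds
  have hC0 : Tendsto C l (nhds 0) := by
    have h := hasymp.mul hsq
    rw [mul_zero] at h
    refine Tendsto.congr' ?_ h
    filter_upwards [hmemIoi] with T hT
    rw [div_mul_cancel₀ _ (Real.sqrt_pos.mpr hT).ne']
  have hF0 : Tendsto (fun T => IVaux.F (x T)) l (nhds 0) := by
    have h := hC0.div_const S₀
    rw [zero_div] at h
    refine Tendsto.congr' ?_ h
    filter_upwards [hCF] with T hT
    rw [hT, mul_div_cancel_left₀ _ hS₀.ne']
  have hxnn : ∀ᶠ T in l, 0 ≤ x T := by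
    filter_upwards [hmemIoi] with T hT
    have h1 := hσimpl_nonneg T hT
    have h2 := Real.sqrt_nonneg T
    positivity
  have hx0 : Tendsto x l (nhds 0) := by
    rw [tendsto_order]
    constructor
    · intro a ha
      filter_upwards [hxnn] with T hT
      linarith
    · intro a ha
      have hFa : 0 < IVaux.F a := IVaux.F_pos ha
      filter_upwards [hF0.eventually (eventually_lt_nhds hFa), hxnn] with T h1 h2
      by_contra hcon
      push_neg at hcon
      exact absurd (IVaux.F_mono (Set.mem_Ici.mpr ha.le) (Set.mem_Ici.mpr h2) hcon)
        (not_le.mpr h1)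
  have hCpos : ∀ᶠ T in l, 0 < C T := by
    filter_upwards [hasymp.eventually (eventually_gt_nhds (half_lt_self hLpos)),
      hmemIoi] with T h1 h2
    have hs : 0 < Real.sqrt T := Real.sqrt_pos.mpr h2
    have h3 : 0 < C T / Real.sqrt T := lt_trans (half_pos hLpos) h1
    have := mul_pos h3 hs
    rwa [div_mul_cancel₀ _ hs.ne'] at this
  have hxpos : ∀ᶠ T in l, 0 < x T := by
    filter_upwards [hCpos, hCF, hxnn] with T h1 h2 h3
    rcases h3.lt_or_eq with h | h
    · exact h
    · exfalso
      rw [← h, IVaux.F_zero, mul_zero] at h2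
      linarith
  have hxl : Tendsto x l (nhdsWithin 0 (Set.Ioi 0)) :=
    tendsto_nhdsWithin_iff.mpr ⟨hx0, hxpos⟩
  have hcomp : Tendsto (fun T => IVaux.F (x T) / x T) l (nhds (2 * IVaux.phi 0)) :=
    IVaux.F_slope.comp hxl
  have hden_ne : S₀ * (2 * IVaux.phi 0) ≠ 0 := by
    have := IVaux.phi_pos 0
    positivity
  have hmain : Tendsto (fun T => 2 * ((C T / Real.sqrt T) / (S₀ * (IVaux.F (x T) / x T)))) l
      (nhds (2 * (L / (S₀ * (2 * IVaux.phi 0))))) :=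
    (hasymp.div (hcomp.const_mul S₀) hden_ne).const_mul 2
  have hval : 2 * (L / (S₀ * (2 * IVaux.phi 0))) = |σ₀| / S₀ := by
    rw [IVaux.phi_zero, hLdef]
    field_simp
  rw [hval] at hmain
  refine Tendsto.congr' ?_ hmain
  filter_upwards [hmemIoi, hCF, hxpos, hCpos] with T hT h2 h3 h4
  have hs : 0 < Real.sqrt T := Real.sqrt_pos.mpr hT
  have hFpos : 0 < IVaux.F (x T) := by
    rw [h2] at h4
    nlinarith [hS₀]
  have hxT : x T = σimpl T * Real.sqrt T / 2 := rfl
  rw [h2]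
  rw [hxT] at hFpos h3 ⊢
  field_simp
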